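/- Let T be a nonnegative random variable, ζ an independent Exponential(λ) random variable with λ > 0, E an event of probability p < 1/2 independent of ζ, and T̂, T̃ independent copies of T, all mutually independent, such that T has the same distribution as ζ + 1_E·(T̂ + T̃). If E[T^j] < ∞ for all j < k, then E[T^k] < ∞. -/

import Mathlib

open MeasureTheory ProbabilityTheory Set

open scoped ENNReal NNReal


lemma aux_summable (a : ℕ) {r : ℝ} (hr0 : 0 < r) (hr1 : r < 1) :
    Summable (fun n : ℕ => ((n : ℝ) + 1) ^ a * r ^ n) := by
  have h := summable_pow_mul_geometric_of_norm_lt_one (R := ℝ) (r := r) a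
    (by rw [Real.norm_eq_abs, abs_of_pos hr0]; exact hr1)
  have h2 : Summable (fun n : ℕ => ((n : ℝ) + 1) ^ a * r ^ (n + 1)) := by
    have := (summable_nat_add_iff 1).2 h
    simpa using this
  have h3 := h2.mul_left r⁻¹
  refine h3.congr fun n => ?_
  field_simp
  ring

lemma aux_exp_moment {Ω : Type*} [MeasurableSpace Ω] (μ : Measure Ω) [IsProbabilityMeasure μ]
    (lam : ℝ) (hlam : 0 < lam) (ζ : Ω → ℝ) (hζ : Measurable ζ)
    (hζ_exp : ∀ x : ℝ, 0 ≤ x → (μ {ω | x < ζ ω}).toReal = Real.exp (-lam * x)) (a : ℕ) :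
    ∫⁻ ω, (ENNReal.ofReal (ζ ω)) ^ a ∂μ < ⊤ := by
  rcases Nat.eq_zero_or_pos a with rfl | ha
  · simp
  have hmeas : ∀ i : ℕ, MeasurableSet {ω | (i : ℝ) < ζ ω} := fun i =>
    measurableSet_lt measurable_const hζ
  have hμ : ∀ i : ℕ, μ {ω | (i : ℝ) < ζ ω} = ENNReal.ofReal (Real.exp (-lam * i)) := by
    intro i
    rw [← hζ_exp i (Nat.cast_nonneg i), ENNReal.ofReal_toReal (measure_ne_top μ _)]
  -- pointwise bound
  have hpt : ∀ ω, (ENNReal.ofReal (ζ ω)) ^ a ≤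
      ∑' i : ℕ, Set.indicator {ω | (i : ℝ) < ζ ω} (fun _ => ((i : ℝ≥0∞) + 1) ^ a) ω := by
    intro ω
    rcases le_or_gt (ζ ω) 0 with h | h
    · have : ENNReal.ofReal (ζ ω) = 0 := ENNReal.ofReal_of_nonpos h
      rw [this, zero_pow ha.ne']
      exact zero_le
    · set i₀ : ℕ := ⌈ζ ω⌉₊ - 1 with hi₀
      have hc1 : 1 ≤ ⌈ζ ω⌉₊ := Nat.one_le_ceil_iff.mpr h
      have hmem : ω ∈ {ω' | (i₀ : ℝ) < ζ ω'} := by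
        have : i₀ < ⌈ζ ω⌉₊ := Nat.sub_lt (by omega) one_pos
        exact Nat.lt_ceil.mp this
      have hle : ENNReal.ofReal (ζ ω) ^ a ≤ ((i₀ : ℝ≥0∞) + 1) ^ a := by
        apply pow_le_pow_left' -- maybe wrong name
        calc ENNReal.ofReal (ζ ω) ≤ ENNReal.ofReal ((⌈ζ ω⌉₊ : ℝ)) :=
              ENNReal.ofReal_le_ofReal (Nat.le_ceil _)
          _ = (⌈ζ ω⌉₊ : ℝ≥0∞) := ENNReal.ofReal_natCast _
          _ = (i₀ : ℝ≥0∞) + 1 := by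
              rw [hi₀]; norm_cast; omega
      calc ENNReal.ofReal (ζ ω) ^ a ≤ ((i₀ : ℝ≥0∞) + 1) ^ a := hle
        _ = Set.indicator {ω' | (i₀ : ℝ) < ζ ω'} (fun _ => ((i₀ : ℝ≥0∞) + 1) ^ a) ω := by
            rw [Set.indicator_of_mem hmem]
        _ ≤ ∑' i : ℕ, Set.indicator {ω' | (i : ℝ) < ζ ω'} (fun _ => ((i : ℝ≥0∞) + 1) ^ a) ω :=
            ENNReal.le_tsum i₀
  calc ∫⁻ ω, (ENNReal.ofReal (ζ ω)) ^ a ∂μ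
      ≤ ∫⁻ ω, ∑' i : ℕ, Set.indicator {ω' | (i : ℝ) < ζ ω'} (fun _ => ((i : ℝ≥0∞) + 1) ^ a) ω ∂μ :=
        lintegral_mono hpt
    _ = ∑' i : ℕ, ∫⁻ ω, Set.indicator {ω' | (i : ℝ) < ζ ω'} (fun _ => ((i : ℝ≥0∞) + 1) ^ a) ω ∂μ :=
        lintegral_tsum (fun i => (measurable_const.indicator (hmeas i)).aemeasurable)
    _ = ∑' i : ℕ, ((i : ℝ≥0∞) + 1) ^ a * μ {ω | (i : ℝ) < ζ ω} := by
        congr 1; ext i; rw [lintegral_indicator (hmeas i), setLIntegral_const]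
    _ = ∑' i : ℕ, ENNReal.ofReal (((i : ℝ) + 1) ^ a * Real.exp (-lam * i)) := by
        congr 1; ext i
        rw [hμ i]
        have hcast : ((i : ℝ≥0∞) + 1) = ENNReal.ofReal ((i : ℝ) + 1) := by
          rw [ENNReal.ofReal_add (by positivity) zero_le_one, ENNReal.ofReal_natCast,
            ENNReal.ofReal_one]
        rw [hcast, ← ENNReal.ofReal_pow (by positivity), ← ENNReal.ofReal_mul (by positivity)]
    _ = ENNReal.ofReal (∑' i : ℕ, ((i : ℝ) + 1) ^ a * Real.exp (-lam * i)) := by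
        have hsum : Summable (fun i : ℕ => ((i : ℝ) + 1) ^ a * Real.exp (-lam * i)) := by
          refine (aux_summable a (Real.exp_pos (-lam)) ?_).congr fun n => ?_
          · exact Real.exp_lt_one_iff.mpr (by linarith)
          · rw [← Real.exp_nat_mul]; ring_nf
        rw [ENNReal.ofReal_tsum_of_nonneg (fun i => by positivity) hsum]
    _ < ⊤ := ENNReal.ofReal_lt_top


lemma aux_pointwise {z c d n b : ℝ} (hb : b = 0 ∨ b = 1) (hc : 0 ≤ c) (hd : 0 ≤ d)
    (hn : 0 ≤ n) :
    ENNReal.ofReal (min (z + b * (c + d)) n) ≤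
      ENNReal.ofReal z + ENNReal.ofReal b *
        (ENNReal.ofReal (min c n) + ENNReal.ofReal (min d n)) := by
  have hofmax : ENNReal.ofReal (max z 0) = ENNReal.ofReal z := by
    rcases le_total z 0 with h | h
    · rw [max_eq_right h, ENNReal.ofReal_zero, ENNReal.ofReal_of_nonpos h]
    · rw [max_eq_left h]
  rcases hb with rfl | rfl
  · simpa using ENNReal.ofReal_le_ofReal (min_le_left z n)
  · have hreal : min (z + 1 * (c + d)) n ≤ max z 0 + (min c n + min d n) := by
      rcases le_total c n with h1 | h1
      · rcases le_total d n with h2 | h2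
        · rw [min_eq_left h1, min_eq_left h2]
          calc min (z + 1 * (c + d)) n ≤ z + 1 * (c + d) := min_le_left _ _
            _ ≤ max z 0 + (c + d) := by nlinarith [le_max_left z 0]
        · rw [min_eq_left h1, min_eq_right h2]
          calc min (z + 1 * (c + d)) n ≤ n := min_le_right _ _
            _ ≤ max z 0 + (c + n) := by nlinarith [le_max_right z 0]
      · rw [min_eq_right h1]
        calc min (z + 1 * (c + d)) n ≤ n := min_le_right _ _
          _ ≤ max z 0 + (n + min d n) := by nlinarith [le_max_right z 0, le_min hd hn]
    calc ENNReal.ofReal (min (z + 1 * (c + d)) n)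
        ≤ ENNReal.ofReal (max z 0 + (min c n + min d n)) := ENNReal.ofReal_le_ofReal hreal
      _ = ENNReal.ofReal z + (ENNReal.ofReal (min c n) + ENNReal.ofReal (min d n)) := by
          rw [ENNReal.ofReal_add (le_max_right z 0) (by positivity),
            ENNReal.ofReal_add (le_min hc hn) (le_min hd hn), hofmax]
      _ = ENNReal.ofReal z + ENNReal.ofReal 1 *
            (ENNReal.ofReal (min c n) + ENNReal.ofReal (min d n)) := by
          rw [ENNReal.ofReal_one, one_mul]

/-- First-step moment lemma: if `T ≥ 0` satisfies `T =d ζ + 1_E (T̂ + T̃)` with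
`ζ ~ Exp(λ)`, `P(E) = p < 1/2`, `T̂, T̃` independent copies of `T`, all mutually
independent, and `E[T^j] < ∞` for all `j < k`, then `E[T^k] < ∞`. -/
theorem hitting_time_kth_moment_finite
    {Ω : Type*} [MeasurableSpace Ω] (μ : Measure Ω) [IsProbabilityMeasure μ]
    (lam p : ℝ) (hlam : 0 < lam) (hp : p < 1 / 2)
    (T ζ That Ttil : Ω → ℝ) (E : Set Ω) (hE : MeasurableSet E) (hpE : (μ E).toReal = p)
    (hT : Measurable T) (hζ : Measurable ζ) (hThat : Measurable That) (hTtil : Measurable Ttil)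
    (hT_nonneg : ∀ ω, 0 ≤ T ω) (hThat_nonneg : ∀ ω, 0 ≤ That ω) (hTtil_nonneg : ∀ ω, 0 ≤ Ttil ω)
    -- ζ is Exponential(λ): survival function characterisation
    (hζ_exp : ∀ x : ℝ, 0 ≤ x → (μ {ω | x < ζ ω}).toReal = Real.exp (-lam * x))
    -- T̂ and T̃ are copies of T
    (hcopy1 : IdentDistrib That T μ μ) (hcopy2 : IdentDistrib Ttil T μ μ)
    -- ζ, 1_E, T̂, T̃ mutually independent
    (hindep : iIndepFun
      ![ζ, E.indicator (fun _ => (1 : ℝ)), That, Ttil] μ)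
    -- the distributional identity T =d ζ + 1_E (T̂ + T̃)
    (hdist : IdentDistrib T
      (fun ω => ζ ω + E.indicator (fun _ => (1 : ℝ)) ω * (That ω + Ttil ω)) μ μ)
    (k : ℕ)
    (hmom : ∀ j : ℕ, j < k → Integrable (fun ω => T ω ^ j) μ) :
    Integrable (fun ω => T ω ^ k) μ := by
  rcases Nat.eq_zero_or_pos k with rfl | hk
  · simpa using integrable_const (1 : ℝ)
  obtain ⟨K, rfl⟩ : ∃ K, k = K + 1 := ⟨k - 1, by omega⟩
  set I : Ω → ℝ := E.indicator (fun _ => (1 : ℝ)) with hIdef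
  have hI : Measurable I := measurable_const.indicator hE
  have hIb : ∀ ω, I ω = 0 ∨ I ω = 1 := fun ω => by
    by_cases h : ω ∈ E
    · right; simp [hIdef, h]
    · left; simp [hIdef, h]
  -- basic measure facts
  have hq : μ E = ENNReal.ofReal p := by
    rw [← hpE, ENNReal.ofReal_toReal (measure_ne_top μ E)]
  have hp0 : 0 ≤ p := hpE ▸ ENNReal.toReal_nonneg
  -- moments
  set Am : ℕ → ℝ≥0∞ := fun i => ∫⁻ ω, ENNReal.ofReal (T ω) ^ i ∂μ with hAmdef
  have hAmlt : ∀ i : ℕ, i < K + 1 → Am i < ⊤ := by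
    intro i hi
    have heq : ∀ ω, ENNReal.ofReal (T ω) ^ i = ‖T ω ^ i‖ₑ := fun ω => by
      rw [← ENNReal.ofReal_pow (hT_nonneg ω),
        ← Real.enorm_eq_ofReal (pow_nonneg (hT_nonneg ω) i)]
    have h2 := (hmom i hi).hasFiniteIntegral
    rw [HasFiniteIntegral] at h2
    simp only [hAmdef]
    simp only [heq]
    exact h2
  have hZm : ∀ a : ℕ, ∫⁻ ω, ENNReal.ofReal (ζ ω) ^ a ∂μ < ⊤ :=
    aux_exp_moment μ lam hlam ζ hζ hζ_exp
  -- truncated moments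
  set Q : ℕ → ℕ → ℝ≥0∞ := fun n i => ∫⁻ ω, ENNReal.ofReal (min (T ω) n) ^ i ∂μ with hQdef
  have hQ_le : ∀ n i, Q n i ≤ Am i := fun n i =>
    lintegral_mono fun ω => pow_le_pow_left' (ENNReal.ofReal_le_ofReal (min_le_left _ _)) i
  have hQ_zero : ∀ n, Q n 0 = 1 := fun n => by simp [hQdef]
  have hQ_lt : ∀ n, Q n (K + 1) < ⊤ := by
    intro n
    calc Q n (K + 1) ≤ ∫⁻ _, ((n : ℝ≥0∞)) ^ (K + 1) ∂μ := by
          apply lintegral_mono fun ω => ?_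
          gcongr
          calc ENNReal.ofReal (min (T ω) n) ≤ ENNReal.ofReal n :=
                ENNReal.ofReal_le_ofReal (min_le_right _ _)
            _ = (n : ℝ≥0∞) := ENNReal.ofReal_natCast n
      _ = (n : ℝ≥0∞) ^ (K + 1) := by simp
      _ < ⊤ := by
          exact ENNReal.pow_lt_top (ENNReal.natCast_lt_top n)
  -- indicator lintegrals
  set Jm : ℕ → ℝ≥0∞ := fun b => ∫⁻ ω, ENNReal.ofReal (I ω) ^ b ∂μ with hJmdef
  have hJm_le : ∀ b, Jm b ≤ 1 := by
    intro b
    have : ∀ ω, ENNReal.ofReal (I ω) ^ b ≤ 1 := fun ω => by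
      rcases hIb ω with h | h <;> simp [h] <;> exact pow_le_one' (by simp) b
    calc Jm b ≤ ∫⁻ _, 1 ∂μ := lintegral_mono this
      _ = 1 := by simp
  have hJm_top : Jm (K + 1) = ENNReal.ofReal p := by
    have : ∀ ω, ENNReal.ofReal (I ω) ^ (K + 1) =
        E.indicator (fun _ => (1 : ℝ≥0∞)) ω := fun ω => by
      by_cases h : ω ∈ E <;> simp [hIdef, h]
    rw [hJmdef]
    simp only []
    rw [lintegral_congr this, lintegral_indicator hE, setLIntegral_const, one_mul, hq]
  -- Z moments
  set Zm : ℕ → ℝ≥0∞ := fun a => ∫⁻ ω, ENNReal.ofReal (ζ ω) ^ a ∂μ with hZmdef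
  have hZm_lt : ∀ a : ℕ, Zm a < ⊤ := fun a => hZm a
  have hZm_zero : Zm 0 = 1 := by simp [hZmdef]
  -- copies
  have hcopyA : ∀ (n : ℕ) (i : ℕ),
      (∫⁻ ω, ENNReal.ofReal (min (That ω) n) ^ i ∂μ) = Q n i := fun n i =>
    (hcopy1.comp (show Measurable (fun x : ℝ => ENNReal.ofReal (min x n) ^ i) by
      fun_prop)).lintegral_eq
  have hcopyB : ∀ (n : ℕ) (i : ℕ),
      (∫⁻ ω, ENNReal.ofReal (min (Ttil ω) n) ^ i ∂μ) = Q n i := fun n i =>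
    (hcopy2.comp (show Measurable (fun x : ℝ => ENNReal.ofReal (min x n) ^ i) by
      fun_prop)).lintegral_eq
  -- full factorization
  have hmeasf : ∀ j, Measurable (![ζ, I, That, Ttil] j) := by
    intro j; fin_cases j <;> assumption
  have hfact : ∀ (n : ℕ) (a b i c : ℕ),
      ∫⁻ ω, ENNReal.ofReal (ζ ω) ^ a * ENNReal.ofReal (I ω) ^ b *
        ENNReal.ofReal (min (That ω) n) ^ i * ENNReal.ofReal (min (Ttil ω) n) ^ c ∂μ =
      Zm a * Jm b * Q n i * Q n c := by
    intro n a b i c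
    have ind01_23 : IndepFun (fun ω => (ζ ω, I ω)) (fun ω => (That ω, Ttil ω)) μ :=
      hindep.indepFun_prodMk_prodMk hmeasf 0 1 2 3 (by decide) (by decide) (by decide)
        (by decide)
    have ind01 : IndepFun ζ I μ := hindep.indepFun (show (0 : Fin 4) ≠ 1 by decide)
    have ind23 : IndepFun That Ttil μ := hindep.indepFun (show (2 : Fin 4) ≠ 3 by decide)
    have hu1 : Measurable (fun x : ℝ × ℝ => ENNReal.ofReal x.1 ^ a * ENNReal.ofReal x.2 ^ b) := by
      fun_prop
    have hu2 : Measurable (fun x : ℝ × ℝ =>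
        ENNReal.ofReal (min x.1 n) ^ i * ENNReal.ofReal (min x.2 n) ^ c) := by fun_prop
    have hFG := lintegral_mul_eq_lintegral_mul_lintegral_of_indepFun'' (μ := μ)
      (f := fun ω => ENNReal.ofReal (ζ ω) ^ a * ENNReal.ofReal (I ω) ^ b)
      (g := fun ω => ENNReal.ofReal (min (That ω) n) ^ i * ENNReal.ofReal (min (Ttil ω) n) ^ c)
      (by fun_prop) (by fun_prop) (ind01_23.comp hu1 hu2)
    have hF := lintegral_mul_eq_lintegral_mul_lintegral_of_indepFun'' (μ := μ)
      (f := fun ω => ENNReal.ofReal (ζ ω) ^ a)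
      (g := fun ω => ENNReal.ofReal (I ω) ^ b)
      (by fun_prop) (by fun_prop)
      (ind01.comp (show Measurable (fun x : ℝ => ENNReal.ofReal x ^ a) by fun_prop)
        (show Measurable (fun x : ℝ => ENNReal.ofReal x ^ b) by fun_prop))
    have hG := lintegral_mul_eq_lintegral_mul_lintegral_of_indepFun'' (μ := μ)
      (f := fun ω => ENNReal.ofReal (min (That ω) n) ^ i)
      (g := fun ω => ENNReal.ofReal (min (Ttil ω) n) ^ c)
      (by fun_prop) (by fun_prop)
      (ind23.comp (show Measurable (fun x : ℝ => ENNReal.ofReal (min x n) ^ i) by fun_prop)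
        (show Measurable (fun x : ℝ => ENNReal.ofReal (min x n) ^ c) by fun_prop))
    calc ∫⁻ ω, ENNReal.ofReal (ζ ω) ^ a * ENNReal.ofReal (I ω) ^ b *
          ENNReal.ofReal (min (That ω) n) ^ i * ENNReal.ofReal (min (Ttil ω) n) ^ c ∂μ
        = ∫⁻ ω, (ENNReal.ofReal (ζ ω) ^ a * ENNReal.ofReal (I ω) ^ b) *
          (ENNReal.ofReal (min (That ω) n) ^ i * ENNReal.ofReal (min (Ttil ω) n) ^ c) ∂μ := by
          apply lintegral_congr; intro ω; ring
      _ = Zm a * Jm b * Q n i * Q n c := by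
          rw [hFG, hF, hG, hcopyA, hcopyB, hZmdef, hJmdef]; ring
  -- per-term computation
  have hterm : ∀ (n j : ℕ),
      ∫⁻ ω, ENNReal.ofReal (ζ ω) ^ j * (ENNReal.ofReal (I ω) *
        (ENNReal.ofReal (min (That ω) n) + ENNReal.ofReal (min (Ttil ω) n))) ^ (K + 1 - j) ∂μ
      = Zm j * (Jm (K + 1 - j) * ∑ i ∈ Finset.range (K + 1 - j + 1),
          (((K + 1 - j).choose i : ℝ≥0∞)) * (Q n i * Q n (K + 1 - j - i))) := by
    intro n j
    set e := K + 1 - j with he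
    calc ∫⁻ ω, ENNReal.ofReal (ζ ω) ^ j * (ENNReal.ofReal (I ω) *
          (ENNReal.ofReal (min (That ω) n) + ENNReal.ofReal (min (Ttil ω) n))) ^ e ∂μ
        = ∫⁻ ω, ∑ i ∈ Finset.range (e + 1), ((e.choose i : ℝ≥0∞)) *
            (ENNReal.ofReal (ζ ω) ^ j * ENNReal.ofReal (I ω) ^ e *
              ENNReal.ofReal (min (That ω) n) ^ i *
              ENNReal.ofReal (min (Ttil ω) n) ^ (e - i)) ∂μ := by
          apply lintegral_congr; intro ω
          rw [mul_pow, add_pow, Finset.mul_sum, Finset.mul_sum]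
          exact Finset.sum_congr rfl fun i _ => by ring
      _ = ∑ i ∈ Finset.range (e + 1), ∫⁻ ω, ((e.choose i : ℝ≥0∞)) *
            (ENNReal.ofReal (ζ ω) ^ j * ENNReal.ofReal (I ω) ^ e *
              ENNReal.ofReal (min (That ω) n) ^ i *
              ENNReal.ofReal (min (Ttil ω) n) ^ (e - i)) ∂μ :=
          lintegral_finset_sum _ (fun i _ => by fun_prop)
      _ = ∑ i ∈ Finset.range (e + 1), ((e.choose i : ℝ≥0∞)) *
            (Zm j * Jm e * Q n i * Q n (e - i)) := by
          refine Finset.sum_congr rfl fun i _ => ?_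
          rw [lintegral_const_mul _ (by fun_prop), hfact]
      _ = Zm j * (Jm e * ∑ i ∈ Finset.range (e + 1),
            ((e.choose i : ℝ≥0∞)) * (Q n i * Q n (e - i))) := by
          rw [Finset.mul_sum, Finset.mul_sum]
          exact Finset.sum_congr rfl fun i _ => by ring
  -- main expansion bound
  have claim1 : ∀ n : ℕ, Q n (K + 1) ≤
      ∑ j ∈ Finset.range (K + 2), (((K + 1).choose j : ℝ≥0∞)) *
        (Zm j * (Jm (K + 1 - j) * ∑ i ∈ Finset.range (K + 1 - j + 1),
          (((K + 1 - j).choose i : ℝ≥0∞)) * (Q n i * Q n (K + 1 - j - i)))) := by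
    intro n
    have step1 : Q n (K + 1) =
        ∫⁻ ω, ENNReal.ofReal (min (ζ ω + I ω * (That ω + Ttil ω)) n) ^ (K + 1) ∂μ :=
      (hdist.comp (show Measurable (fun x : ℝ => ENNReal.ofReal (min x n) ^ (K + 1)) by
        fun_prop)).lintegral_eq
    rw [step1]
    calc ∫⁻ ω, ENNReal.ofReal (min (ζ ω + I ω * (That ω + Ttil ω)) n) ^ (K + 1) ∂μ
        ≤ ∫⁻ ω, (ENNReal.ofReal (ζ ω) + ENNReal.ofReal (I ω) *
            (ENNReal.ofReal (min (That ω) n) + ENNReal.ofReal (min (Ttil ω) n))) ^ (K + 1) ∂μ := by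
          apply lintegral_mono; intro ω
          exact pow_le_pow_left' (aux_pointwise (hIb ω) (hThat_nonneg ω) (hTtil_nonneg ω)
            (Nat.cast_nonneg n)) _
      _ = ∫⁻ ω, ∑ j ∈ Finset.range (K + 2), (((K + 1).choose j : ℝ≥0∞)) *
            (ENNReal.ofReal (ζ ω) ^ j * (ENNReal.ofReal (I ω) *
              (ENNReal.ofReal (min (That ω) n) +
                ENNReal.ofReal (min (Ttil ω) n))) ^ (K + 1 - j)) ∂μ := by
          apply lintegral_congr; intro ω
          rw [add_pow]
          exact Finset.sum_congr rfl fun j _ => by ring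
      _ = ∑ j ∈ Finset.range (K + 2), ∫⁻ ω, (((K + 1).choose j : ℝ≥0∞)) *
            (ENNReal.ofReal (ζ ω) ^ j * (ENNReal.ofReal (I ω) *
              (ENNReal.ofReal (min (That ω) n) +
                ENNReal.ofReal (min (Ttil ω) n))) ^ (K + 1 - j)) ∂μ :=
          lintegral_finset_sum _ (fun j _ => by fun_prop)
      _ = ∑ j ∈ Finset.range (K + 2), (((K + 1).choose j : ℝ≥0∞)) *
            (Zm j * (Jm (K + 1 - j) * ∑ i ∈ Finset.range (K + 1 - j + 1),
              (((K + 1 - j).choose i : ℝ≥0∞)) * (Q n i * Q n (K + 1 - j - i)))) := by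
          refine Finset.sum_congr rfl fun j _ => ?_
          rw [lintegral_const_mul _ (by fun_prop), hterm]
  -- the finite constants
  set Dmid : ℝ≥0∞ := ∑ i ∈ Finset.range K, (((K + 1).choose (i + 1) : ℝ≥0∞)) *
      (Am (i + 1) * Am (K - i)) with hDmiddef
  set C1 : ℝ≥0∞ := ∑ j ∈ Finset.range (K + 1), (((K + 1).choose (j + 1) : ℝ≥0∞)) *
      (Zm (j + 1) * (1 * ∑ i ∈ Finset.range (K - j + 1),
        (((K - j).choose i : ℝ≥0∞)) * (Am i * Am (K - j - i)))) with hC1def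
  have hDmid_lt : Dmid < ⊤ := by
    rw [hDmiddef]
    refine ENNReal.sum_lt_top.mpr fun i hi => ?_
    have hi' : i < K := Finset.mem_range.mp hi
    exact ENNReal.mul_lt_top (ENNReal.natCast_lt_top _)
      (ENNReal.mul_lt_top (hAmlt _ (by omega)) (hAmlt _ (by omega)))
  have hC1_lt : C1 < ⊤ := by
    rw [hC1def]
    refine ENNReal.sum_lt_top.mpr fun j hj => ?_
    refine ENNReal.mul_lt_top (ENNReal.natCast_lt_top _)
      (ENNReal.mul_lt_top (hZm_lt _) ?_)
    rw [one_mul]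
    refine ENNReal.sum_lt_top.mpr fun i hi => ?_
    have hi' : i < K - j + 1 := Finset.mem_range.mp hi
    exact ENNReal.mul_lt_top (ENNReal.natCast_lt_top _)
      (ENNReal.mul_lt_top (hAmlt _ (by omega)) (hAmlt _ (by omega)))
  have hple : ENNReal.ofReal p ≤ 1 := by
    rw [← hq]; exact prob_le_one
  -- the main bound
  have hbound : ∀ n : ℕ, Q n (K + 1) ≤ (C1 + Dmid) +
      (ENNReal.ofReal p * Q n (K + 1) + ENNReal.ofReal p * Q n (K + 1)) := by
    intro n
    refine (claim1 n).trans ?_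
    rw [Finset.sum_range_succ']
    -- bound the j ≥ 1 part by C1
    have hpart1 : ∑ j ∈ Finset.range (K + 1), (((K + 1).choose (j + 1) : ℝ≥0∞)) *
        (Zm (j + 1) * (Jm (K + 1 - (j + 1)) * ∑ i ∈ Finset.range (K + 1 - (j + 1) + 1),
          (((K + 1 - (j + 1)).choose i : ℝ≥0∞)) * (Q n i * Q n (K + 1 - (j + 1) - i)))) ≤
        C1 := by
      rw [hC1def]
      simp only [Nat.succ_sub_succ]
      gcongr with j hj i hi
      · exact hJm_le _
      · exact hQ_le n i
      · exact hQ_le n _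
    -- the j = 0 term
    have hpart0 : (((K + 1).choose 0 : ℝ≥0∞)) *
        (Zm 0 * (Jm (K + 1 - 0) * ∑ i ∈ Finset.range (K + 1 - 0 + 1),
          (((K + 1 - 0).choose i : ℝ≥0∞)) * (Q n i * Q n (K + 1 - 0 - i)))) ≤
        Dmid + (ENNReal.ofReal p * Q n (K + 1) + ENNReal.ofReal p * Q n (K + 1)) := by
      simp only [Nat.choose_zero_right, Nat.cast_one, one_mul, Nat.sub_zero, hZm_zero, hJm_top]
      -- inner sum: peel i = K+1 and i = 0
      have hinner : ∑ i ∈ Finset.range (K + 1 + 1), (((K + 1).choose i : ℝ≥0∞)) *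
          (Q n i * Q n (K + 1 - i)) ≤ Dmid + Q n (K + 1) + Q n (K + 1) := by
        rw [Finset.sum_range_succ, Finset.sum_range_succ']
        have hlast : (((K + 1).choose (K + 1) : ℝ≥0∞)) * (Q n (K + 1) * Q n (K + 1 - (K + 1)))
            = Q n (K + 1) := by
          simp [Nat.choose_self, hQ_zero]
        have hfirst : (((K + 1).choose 0 : ℝ≥0∞)) * (Q n 0 * Q n (K + 1 - 0)) = Q n (K + 1) := by
          simp [hQ_zero]
        rw [hlast, hfirst]
        have hmid : ∑ i ∈ Finset.range K, (((K + 1).choose (i + 1) : ℝ≥0∞)) *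
            (Q n (i + 1) * Q n (K + 1 - (i + 1))) ≤ Dmid := by
          rw [hDmiddef]
          simp only [Nat.succ_sub_succ]
          gcongr with i hi
          · exact hQ_le n _
          · exact hQ_le n _
        exact add_le_add_left (add_le_add_left hmid _) _
      calc ENNReal.ofReal p * ∑ i ∈ Finset.range (K + 1 + 1), (((K + 1).choose i : ℝ≥0∞)) *
            (Q n i * Q n (K + 1 - i))
          ≤ ENNReal.ofReal p * (Dmid + Q n (K + 1) + Q n (K + 1)) := mul_le_mul_right hinner _
        _ = ENNReal.ofReal p * Dmid + ENNReal.ofReal p * Q n (K + 1) +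
              ENNReal.ofReal p * Q n (K + 1) := by ring
        _ ≤ 1 * Dmid + ENNReal.ofReal p * Q n (K + 1) + ENNReal.ofReal p * Q n (K + 1) := by
            gcongr
        _ = Dmid + (ENNReal.ofReal p * Q n (K + 1) + ENNReal.ofReal p * Q n (K + 1)) := by
            rw [one_mul]; ring
    refine le_trans (add_le_add hpart1 hpart0) (le_of_eq (by ring))
  -- real arithmetic: uniform bound on Q n (K+1)
  set C0 : ℝ≥0∞ := C1 + Dmid with hC0def
  have hC0_lt : C0 < ⊤ := ENNReal.add_lt_top.mpr ⟨hC1_lt, hDmid_lt⟩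
  have huniform : ∀ n : ℕ, Q n (K + 1) ≤ ENNReal.ofReal (C0.toReal / (1 - 2 * p)) := by
    intro n
    have h1 := hbound n
    have hx : Q n (K + 1) ≠ ⊤ := (hQ_lt n).ne
    have hne : C0 + (ENNReal.ofReal p * Q n (K + 1) + ENNReal.ofReal p * Q n (K + 1)) ≠ ⊤ := by
      refine ENNReal.add_ne_top.mpr ⟨hC0_lt.ne, ENNReal.add_ne_top.mpr ⟨?_, ?_⟩⟩ <;>
        exact ENNReal.mul_ne_top ENNReal.ofReal_ne_top hx
    have h2 := ENNReal.toReal_mono hne h1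
    rw [ENNReal.toReal_add hC0_lt.ne (ENNReal.add_ne_top.mpr
        ⟨ENNReal.mul_ne_top ENNReal.ofReal_ne_top hx, ENNReal.mul_ne_top ENNReal.ofReal_ne_top hx⟩),
      ENNReal.toReal_add (ENNReal.mul_ne_top ENNReal.ofReal_ne_top hx)
        (ENNReal.mul_ne_top ENNReal.ofReal_ne_top hx),
      ENNReal.toReal_mul, ENNReal.toReal_ofReal hp0] at h2
    set x := (Q n (K + 1)).toReal with hxdef
    have hxreal : x ≤ C0.toReal / (1 - 2 * p) := by
      rw [le_div_iff₀ (by linarith)]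
      nlinarith
    calc Q n (K + 1) = ENNReal.ofReal x := (ENNReal.ofReal_toReal hx).symm
      _ ≤ ENNReal.ofReal (C0.toReal / (1 - 2 * p)) := ENNReal.ofReal_le_ofReal hxreal
  -- monotone convergence
  have hmono : Monotone (fun n : ℕ => fun ω => ENNReal.ofReal (min (T ω) n) ^ (K + 1)) := by
    intro n m hnm
    intro ω
    exact pow_le_pow_left' (ENNReal.ofReal_le_ofReal
      (min_le_min le_rfl (Nat.cast_le.mpr hnm))) _
  have hsup : ∫⁻ ω, ENNReal.ofReal (T ω) ^ (K + 1) ∂μ = ⨆ n : ℕ, Q n (K + 1) := by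
    rw [hQdef]
    rw [← lintegral_iSup (fun n => by fun_prop) hmono]
    apply lintegral_congr; intro ω
    apply le_antisymm
    · refine le_iSup_of_le ⌈T ω⌉₊ ?_
      rw [min_eq_left (Nat.le_ceil (T ω))]
    · exact iSup_le fun n => pow_le_pow_left' (ENNReal.ofReal_le_ofReal (min_le_left _ _)) _
  have hfin : ∫⁻ ω, ENNReal.ofReal (T ω) ^ (K + 1) ∂μ < ⊤ := by
    rw [hsup]
    exact lt_of_le_of_lt (iSup_le fun n => huniform n) ENNReal.ofReal_lt_top
  -- conclusion
  refine ⟨(hT.pow_const (K + 1)).aestronglyMeasurable, ?_⟩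
  rw [HasFiniteIntegral]
  have heq : ∀ ω, ‖T ω ^ (K + 1)‖ₑ = ENNReal.ofReal (T ω) ^ (K + 1) := fun ω => by
    rw [← ENNReal.ofReal_pow (hT_nonneg ω),
      Real.enorm_eq_ofReal (pow_nonneg (hT_nonneg ω) (K + 1))]
  calc ∫⁻ ω, ‖T ω ^ (K + 1)‖ₑ ∂μ
      = ∫⁻ ω, ENNReal.ofReal (T ω) ^ (K + 1) ∂μ := lintegral_congr heq
    _ < ⊤ := hfin
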